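/- Let h be a K-strongly convex penalty on compact convex X, h* its convex conjugate, Q(y) = argmax_{x∈X}{⟨y,x⟩ − h(x)}, and define the Fenchel coupling F(p, y) = h(p) + h*(y) − ⟨y, p⟩ for p ∈ X, y ∈ V*. Then F(p, y) ≥ (K/2)‖Q(y) − p‖² for all p ∈ X and y ∈ V*. -/

import Mathlib

/-- The Fenchel coupling `F(p,y) = h(p) + h*(y) − ⟨y,p⟩` of a `K`-strongly
convex penalty `h` on a compact convex set `X` satisfies
`F(p,y) ≥ (K/2) ‖Q(y) − p‖²`, where `Q(y)` is the maximizer defining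
`h*(y) = ⟨y, Q(y)⟩ − h(Q(y))`. -/
theorem stmt8
    {E : Type*} [NormedAddCommGroup E] [InnerProductSpace ℝ E] [FiniteDimensional ℝ E]
    (X : Set E) (hXc : IsCompact X) (hXconv : Convex ℝ X) (hXne : X.Nonempty)
    (h : E → ℝ) (hcont : ContinuousOn h X)
    (K : ℝ) (hK : 0 < K)
    (hsc : ∀ x ∈ X, ∀ x' ∈ X, ∀ t ∈ Set.Icc (0 : ℝ) 1,
      h (t • x + (1 - t) • x') ≤ t * h x + (1 - t) * h x' - K / 2 * t * (1 - t) * ‖x' - x‖ ^ 2)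
    (Q : E → E)
    (hQ : ∀ y : E, Q y ∈ X ∧ ∀ x ∈ X, (inner ℝ y x : ℝ) - h x ≤ (inner ℝ y (Q y) : ℝ) - h (Q y)) :
    ∀ p ∈ X, ∀ y : E,
      K / 2 * ‖Q y - p‖ ^ 2 ≤
        h p + ((inner ℝ y (Q y) : ℝ) - h (Q y)) - (inner ℝ y p : ℝ) := by
  intro p hp y
  obtain ⟨hQX, hQopt⟩ := hQ y
  set q := Q y with hq
  set F : ℝ := h p + ((inner ℝ y q : ℝ) - h q) - (inner ℝ y p : ℝ) with hF
  -- key inequality for t ∈ (0,1]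
  have key : ∀ t ∈ Set.Ioc (0:ℝ) 1, K / 2 * (1 - t) * ‖q - p‖ ^ 2 ≤ F := by
    intro t ht
    obtain ⟨ht0, ht1⟩ := ht
    have htI : t ∈ Set.Icc (0:ℝ) 1 := ⟨ht0.le, ht1⟩
    have hxt : t • p + (1 - t) • q ∈ X :=
      hXconv hp hQX ht0.le (by linarith) (by ring)
    have h1 := hsc p hp q hQX t htI
    have h2 := hQopt _ hxt
    have h3 : (inner ℝ y (t • p + (1 - t) • q) : ℝ)
        = t * (inner ℝ y p : ℝ) + (1 - t) * (inner ℝ y q : ℝ) := by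
      rw [inner_add_right, real_inner_smul_right, real_inner_smul_right]
    rw [h3] at h2
    have := mul_pos (div_pos hK (by norm_num : (0:ℝ) < 2)) ht0
    nlinarith [sq_nonneg (‖q - p‖)]
  -- take t → 0
  have hlim : Filter.Tendsto (fun t : ℝ => K / 2 * (1 - t) * ‖q - p‖ ^ 2)
      (nhdsWithin 0 (Set.Ioc (0:ℝ) 1)) (nhds (K / 2 * ‖q - p‖ ^ 2)) := by
    have : Filter.Tendsto (fun t : ℝ => K / 2 * (1 - t) * ‖q - p‖ ^ 2)
        (nhds 0) (nhds (K / 2 * (1 - 0) * ‖q - p‖ ^ 2)) := by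
      apply Continuous.tendsto
      continuity
    simpa using this.mono_left nhdsWithin_le_nhds
  have hne : (nhdsWithin (0:ℝ) (Set.Ioc (0:ℝ) 1)).NeBot := by
    apply mem_closure_iff_nhdsWithin_neBot.mp
    refine mem_closure_iff_seq_limit.mpr ⟨fun n => 1 / (n + 2 : ℝ), ?_, ?_⟩
    · intro n
      constructor
      · positivity
      · rw [div_le_one (by positivity)]
        linarith [Nat.cast_nonneg (α := ℝ) n]
    · have : Filter.Tendsto (fun n : ℕ => 1 / ((n:ℝ) + 2)) Filter.atTop (nhds 0) := by
        apply Filter.Tendsto.div_atTop tendsto_const_nhds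
        exact Filter.tendsto_atTop_add_const_right _ 2 tendsto_natCast_atTop_atTop
      exact this
  exact le_of_tendsto hlim (eventually_nhdsWithin_of_forall key)
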